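/- Let A be a left brace, X ⊆ A a subset additively generating (A,+) with r = r_A|_{X×X} a Yang–Baxter solution on X, and k: X → X. Then k_2 r = r k_1 (equivalently k_1 r = r k_2) holds if and only if k(x) - x ∈ Soc(A) for all x ∈ X and k commutes with every λ_x (x ∈ X) as a map on X. -/

import Mathlib

/-- A left brace structure on an additive abelian group: a group operation
`circ` (with inverse `inv`, whose identity is 0) satisfying the left brace
compatibility a∘(b+c) = a∘b - a + a∘c. -/
structure LeftBrace (A : Type*) [AddCommGroup A] where
  circ : A → A → A
  inv : A → A
  circ_assoc : ∀ a b c, circ (circ a b) c = circ a (circ b c)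
  circ_zero : ∀ a, circ a 0 = a
  zero_circ : ∀ a, circ 0 a = a
  circ_inv : ∀ a, circ a (inv a) = 0
  inv_circ : ∀ a, circ (inv a) a = 0
  compat : ∀ a b c, circ a (b + c) = circ a b - a + circ a c

namespace LeftBrace

variable {A : Type*} [AddCommGroup A] (B : LeftBrace A)

/-- λ_a(b) = -a + a∘b. -/
def lam (a b : A) : A := -a + B.circ a b

/-- a*b = λ_a(b) - b. -/
def star (a b : A) : A := B.lam a b - b

/-- μ_b(a) = λ_a(b)ʹ ∘ a ∘ b. -/
def mu (b a : A) : A := B.circ (B.inv (B.lam a b)) (B.circ a b)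

/-- A left brace is two-sided if (a+b)∘c = a∘c - c + b∘c. -/
def IsTwoSided : Prop := ∀ a b c : A, B.circ (a + b) c = B.circ a c - c + B.circ b c

/-- The Yang–Baxter map r_A(a,b) = (λ_a(b), μ_b(a)) associated to a left brace. -/
def rmap : A × A → A × A := fun p => (B.lam p.1 p.2, B.mu p.2 p.1)

/-- `r × id` acting on triples. -/
def r1map {X : Type*} (r : X × X → X × X) : X × X × X → X × X × X :=
  fun p => ((r (p.1, p.2.1)).1, (r (p.1, p.2.1)).2, p.2.2)

/-- `id × r` acting on triples. -/
def r2map {X : Type*} (r : X × X → X × X) : X × X × X → X × X × X :=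
  fun p => (p.1, r p.2)

/-- `id × k` on pairs. -/
def k2map {X : Type*} (k : X → X) : X × X → X × X := fun p => (p.1, k p.2)

/-- `k × id` on pairs. -/
def k1map {X : Type*} (k : X → X) : X × X → X × X := fun p => (k p.1, p.2)

end LeftBrace

open LeftBrace

section Lemmas
variable {A : Type*} [AddCommGroup A] (B : LeftBrace A)

lemma LB.circ_eq_add_lam (a b : A) : B.circ a b = a + B.lam a b := by
  simp [LeftBrace.lam]

lemma LB.lam_add (a b c : A) : B.lam a (b + c) = B.lam a b + B.lam a c := by
  simp only [LeftBrace.lam, B.compat]; abel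

lemma LB.lam_zero (a : A) : B.lam a 0 = 0 := by
  simp [LeftBrace.lam, B.circ_zero]

lemma LB.lam_neg (a b : A) : B.lam a (-b) = -B.lam a b := by
  have h := LB.lam_add B a b (-b)
  rw [add_neg_cancel, LB.lam_zero] at h
  exact (neg_eq_of_add_eq_zero_right h.symm).symm

lemma LB.zero_lam (b : A) : B.lam 0 b = b := by
  simp [LeftBrace.lam, B.zero_circ]

lemma LB.circ_neg (a b : A) : B.circ a (-b) = a - (B.circ a b - a) := by
  have h2 := B.compat a b (-b)
  rw [add_neg_cancel, B.circ_zero] at h2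
  exact eq_sub_of_add_eq' h2.symm

lemma LB.lam_lam (a b c : A) : B.lam a (B.lam b c) = B.lam (B.circ a b) c := by
  simp only [LeftBrace.lam]
  rw [B.compat, LB.circ_neg, B.circ_assoc]
  abel

lemma LB.lam_inv_lam (a b : A) : B.lam (B.inv a) (B.lam a b) = b := by
  rw [LB.lam_lam, B.inv_circ, LB.zero_lam]

lemma LB.lam_lam_inv (a b : A) : B.lam a (B.lam (B.inv a) b) = b := by
  rw [LB.lam_lam, B.circ_inv, LB.zero_lam]

lemma LB.soc_lam {s : A} (hs : ∀ b, B.lam s b = b) (a : A) :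
    ∀ b, B.lam (B.lam a s) b = b := by
  have key : B.lam a s = B.circ a (B.circ s (B.inv a)) := by
    have h1 : B.circ s (B.inv a) = s + B.inv a := by rw [LB.circ_eq_add_lam, hs]
    rw [h1, B.compat, LB.circ_eq_add_lam B a s, B.circ_inv]
    abel
  intro b
  rw [key, ← LB.lam_lam, ← LB.lam_lam, hs, LB.lam_lam_inv]

lemma LB.mu_eq (b a : A) : B.mu b a = B.lam (B.inv (B.lam a b)) a := by
  rw [LeftBrace.mu, LB.circ_eq_add_lam B a b, B.compat, B.inv_circ]
  simp only [LeftBrace.lam]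
  abel

/-- decomposition of λ_{a+c} -/
lemma LB.lam_add_left (a c b : A) :
    B.lam (a + c) b = B.lam a (B.lam (B.lam (B.inv a) c) b) := by
  have h : a + c = B.circ a (B.lam (B.inv a) c) := by
    rw [LB.circ_eq_add_lam, LB.lam_lam_inv]
  rw [h, LB.lam_lam]

/-- extend equality of lambdas from generators -/
lemma LB.lam_ext {X : Set A} (hgen : AddSubgroup.closure X = ⊤) {p q : A}
    (h : ∀ y ∈ X, B.lam p y = B.lam q y) : ∀ b, B.lam p b = B.lam q b := by
  intro b
  have hb : b ∈ AddSubgroup.closure X := by rw [hgen]; trivial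
  induction hb using AddSubgroup.closure_induction with
  | mem y hy => exact h y hy
  | zero => rw [LB.lam_zero, LB.lam_zero]
  | add u v _ _ hu hv => rw [LB.lam_add, LB.lam_add, hu, hv]
  | neg u _ hu => rw [LB.lam_neg, LB.lam_neg, hu]

end Lemmas

/-- Theorem 3.6: k₂r = rk₁ holds iff k(x) - x ∈ Soc(A) for all x ∈ X and k
commutes with every λ_x on X. -/
theorem statement14 {A : Type*} [AddCommGroup A] (B : LeftBrace A)
    (X : Set A) (hgen : AddSubgroup.closure X = ⊤)
    (hclosed : ∀ x ∈ X, ∀ y ∈ X, B.lam x y ∈ X ∧ B.mu y x ∈ X)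
    (k : A → A) (hk : ∀ x ∈ X, k x ∈ X) :
    (∀ x ∈ X, ∀ y ∈ X, B.lam x y = B.lam (k x) y ∧ k (B.mu y x) = B.mu y (k x)) ↔
    ((∀ x ∈ X, ∀ b : A, B.circ (k x - x) b = (k x - x) + b) ∧
      (∀ x ∈ X, ∀ y ∈ X, k (B.lam x y) = B.lam x (k y))) := by
  constructor
  · intro H
    -- λ_x = λ_{kx} on all of A, by additive extension from X
    have hlamext : ∀ x ∈ X, ∀ b, B.lam x b = B.lam (k x) b := fun x hx =>
      LB.lam_ext B hgen (fun y hy => (H x hx y hy).1)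
    -- socle part
    have hsoc : ∀ x ∈ X, ∀ b, B.lam (k x - x) b = b := by
      intro x hx
      set c := k x - x with hc
      have hkx : k x = x + c := by rw [hc]; abel
      set d := B.lam (B.inv x) c with hd
      have hdsoc : ∀ b, B.lam d b = b := by
        intro b
        have h1 : B.lam x (B.lam d b) = B.lam x b := by
          have h0 := (hlamext x hx b).symm
          rw [hkx, LB.lam_add_left] at h0
          exact h0
        have h2 := congrArg (B.lam (B.inv x)) h1
        rwa [LB.lam_inv_lam, LB.lam_inv_lam] at h2
      have hcd : c = B.lam x d := by rw [hd, LB.lam_lam_inv]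
      intro b
      rw [hcd]
      exact LB.soc_lam B hdsoc x b
    refine ⟨fun x hx b => by rw [LB.circ_eq_add_lam, hsoc x hx b], ?_⟩
    -- commutation part
    intro x hx y hy
    set u := B.lam x y with hu
    have huX : u ∈ X := (hclosed x hx y hy).1
    set v := B.mu y x with hv
    have hvX : v ∈ X := (hclosed x hx y hy).2
    have huv : B.lam u v = x := by
      rw [hv, LB.mu_eq, ← hu, LB.lam_lam_inv]
    have hmu_vu : B.mu v u = y := by
      rw [LB.mu_eq, huv, hu, LB.lam_inv_lam]
    have hmu_vku : B.mu v (k u) = B.lam (B.inv x) (k u) := by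
      rw [LB.mu_eq, ← (H u huX v hvX).1, huv]
    have h2 := (H u huX v hvX).2
    rw [hmu_vu, hmu_vku] at h2
    have h3 := congrArg (B.lam x) h2
    rwa [LB.lam_lam_inv, eq_comm] at h3
  · rintro ⟨h1, h2⟩
    intro x hx y hy
    set c := k x - x with hc
    have hkx : k x = x + c := by rw [hc]; abel
    have hcsoc : ∀ b, B.lam c b = b := by
      intro b
      have h := h1 x hx b
      rw [LB.circ_eq_add_lam] at h
      exact add_left_cancel h
    have hlam : ∀ b, B.lam (k x) b = B.lam x b := by
      intro b
      rw [hkx, LB.lam_add_left, LB.soc_lam B hcsoc (B.inv x) b]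
    refine ⟨(hlam y).symm, ?_⟩
    set u := B.lam x y with hu
    have huX : u ∈ X := (hclosed x hx y hy).1
    have hmuX : B.mu y x ∈ X := (hclosed x hx y hy).2
    have hue : B.lam u (B.mu y x) = x := by rw [LB.mu_eq, ← hu, LB.lam_lam_inv]
    have hk2 := h2 u huX (B.mu y x) hmuX
    rw [hue] at hk2
    have hkmu : k (B.mu y x) = B.lam (B.inv u) (k x) := by
      have h := congrArg (B.lam (B.inv u)) hk2
      rwa [LB.lam_inv_lam, eq_comm] at h
    rw [hkmu, LB.mu_eq, hlam y, ← hu]
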